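/- Let α⁺, λ⁺, α⁻, λ⁻ > 0, r ≥ q ≥ 0, and let Φ be as in the bilateral Esscher martingale parametrization on the interval I = (λ⁺ − (1 − e^{−(r−q)/α⁺})^{−1}, λ⁺ − 1). Then for θ⁺ ∈ (−∞, λ⁺) and θ⁻ ∈ (−∞, λ⁻) with λ⁺ − θ⁺ > 1, the equation ((λ⁺−θ⁺)/(λ⁺−θ⁺−1))^{α⁺} · ((λ⁻−θ⁻)/(λ⁻−θ⁻+1))^{α⁻} = e^{r−q} holds if and only if θ⁺ ∈ I and θ⁻ = Φ(θ⁺). -/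

import Mathlib

open Real Set

theorem bilateral_esscher_martingale_characterization
    (ap lp am lm r q : ℝ)
    (hap : 0 < ap) (hlp : 0 < lp) (ham : 0 < am) (hlm : 0 < lm)
    (hq : 0 ≤ q) (hrq : q ≤ r)
    (Φ : ℝ → ℝ)
    (hΦ : ∀ θ, Φ θ =
      lm - (((((lp - θ) / (lp - θ - 1)) ^ ap * Real.exp (-(r - q))) ^ (1 / am)) - 1)⁻¹)
    (I : Set ℝ)
    (hI : I = if r = q then Iio (lp - 1)
              else Ioo (lp - (1 - Real.exp (-(r - q) / ap))⁻¹) (lp - 1))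
    (θp θm : ℝ) (hθp : θp < lp) (hθm : θm < lm) (hθp1 : 1 < lp - θp) :
    ((lp - θp) / (lp - θp - 1)) ^ ap * ((lm - θm) / (lm - θm + 1)) ^ am =
        Real.exp (r - q) ↔
      θp ∈ I ∧ θm = Φ θp := by
  set x := lp - θp with hx
  set y := lm - θm with hy
  have hx1 : 1 < x := hθp1
  have hxm1 : 0 < x - 1 := by linarith
  have hx0 : 0 < x := by linarith
  have hy0 : 0 < y := by simp only [hy]; linarith
  set c := r - q with hc
  have hc0 : 0 ≤ c := by simp only [hc]; linarith
  have hB1 : 1 < x / (x - 1) := (one_lt_div hxm1).2 (by linarith)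
  have hB0 : (0:ℝ) < x / (x - 1) := by linarith
  set B := (x / (x - 1)) ^ ap with hBdef
  have hBpos : 0 < B := rpow_pos_of_pos hB0 ap
  set A := B * Real.exp (-c) with hA
  have hApos : 0 < A := mul_pos hBpos (exp_pos _)
  have hAeq : A = B / Real.exp c := by rw [hA, Real.exp_neg, div_eq_mul_inv]
  -- Claim 1 : θp ∈ I ↔ 1 < A
  have claim1 : θp ∈ I ↔ 1 < A := by
    have h1 : (1 < A) ↔ Real.exp c < B := by
      rw [hAeq, lt_div_iff₀ (exp_pos c), one_mul]
    have h2 : Real.exp c < B ↔ Real.exp (c / ap) < x / (x - 1) := by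
      have : Real.exp c = (Real.exp (c / ap)) ^ ap := by
        rw [← Real.exp_mul, div_mul_cancel₀ _ hap.ne']
      rw [this, hBdef, Real.rpow_lt_rpow_iff (exp_pos _).le hB0.le hap]
    rw [h1, h2, hI]
    by_cases hrq' : r = q
    · simp only [hrq', if_pos rfl]
      have hcz : c = 0 := by simp [hc, hrq']
      simp only [hcz, zero_div, Real.exp_zero]
      exact ⟨fun _ => hB1, fun _ => mem_Iio.mpr (by linarith)⟩
    · simp only [if_neg hrq']
      have hcpos : 0 < c := by
        rcases lt_or_eq_of_le hrq with h | h
        · simp only [hc]; linarith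
        · exact absurd h.symm hrq'
      set E := Real.exp (c / ap) with hE
      have hE1 : 1 < E := by
        rw [hE, ← Real.exp_zero]
        exact Real.exp_lt_exp.2 (by positivity)
      have hEm1 : 0 < E - 1 := by linarith
      have hinv : Real.exp (-c / ap) = E⁻¹ := by
        rw [hE, ← Real.exp_neg, neg_div]
      have hkey : (1 - Real.exp (-c / ap))⁻¹ = E / (E - 1) := by
        rw [hinv]
        have hEne : E ≠ 0 := by positivity
        field_simp
      constructor
      · intro hmem
        rw [mem_Ioo, hkey] at hmem
        have hxlt : x < E / (E - 1) := by
          simp only [hx]; linarith [hmem.1]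
        rw [lt_div_iff₀ hEm1] at hxlt
        rw [lt_div_iff₀ hxm1]
        nlinarith
      · intro hlt
        rw [mem_Ioo, hkey]
        rw [lt_div_iff₀ hxm1] at hlt
        have h3 : x * (E - 1) < E := by nlinarith
        have h4 : x < E / (E - 1) := (lt_div_iff₀ hEm1).2 h3
        constructor
        · simp only [hx] at h4 ⊢; linarith
        · linarith
  -- equation ↔ (1 < A ∧ θm = Φ θp)
  have hΦval : Φ θp = lm - (A ^ (1 / am) - 1)⁻¹ := by
    rw [hΦ θp, ← hx, ← hBdef, ← hA]
  rw [claim1]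
  constructor
  · intro hEq
    have hyy : 0 < y / (y + 1) := by positivity
    have hyy1 : y / (y + 1) < 1 := (div_lt_one (by linarith)).2 (by linarith)
    have hP1 : (y / (y + 1)) ^ am < 1 := Real.rpow_lt_one hyy.le hyy1 ham
    have hP0 : 0 < (y / (y + 1)) ^ am := rpow_pos_of_pos hyy am
    have hcB : Real.exp c < B := by nlinarith [Real.exp_pos c]
    have h1A : 1 < A := by rw [hAeq]; exact (one_lt_div (exp_pos c)).2 hcB
    refine ⟨h1A, ?_⟩
    have hPA : (y / (y + 1)) ^ am = A⁻¹ := by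
      rw [hAeq, inv_div, eq_div_iff hBpos.ne', mul_comm]
      exact hEq
    have hinvP : ((y + 1) / y) ^ am = A := by
      rw [← inv_div y (y + 1), Real.inv_rpow hyy.le, hPA, inv_inv]
    have hratio : (y + 1) / y = A ^ (1 / am) := by
      rw [one_div, ← hinvP, Real.rpow_rpow_inv (by positivity) ham.ne']
    have hdiff : (y + 1) / y - 1 = y⁻¹ := by field_simp; ring
    rw [hΦval, ← hratio, hdiff, inv_inv]
    simp only [hy]; ring
  · rintro ⟨h1A, hθmΦ⟩
    set t := A ^ (1 / am) with ht
    have ht1 : 1 < t := by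
      rw [ht]
      rw [Real.one_lt_rpow_iff_of_pos hApos]
      exact Or.inl ⟨h1A, by positivity⟩
    have htm1 : 0 < t - 1 := by linarith
    have hyval : y = (t - 1)⁻¹ := by
      rw [hy, hθmΦ, hΦval]; ring
    have hy1 : y + 1 = t / (t - 1) := by
      rw [hyval]; field_simp; ring
    have htne : t ≠ 0 := by linarith
    have hratio : y / (y + 1) = t⁻¹ := by
      rw [hyval]
      field_simp; ring
    have htam : t ^ am = A := by
      rw [ht, one_div, Real.rpow_inv_rpow hApos.le ham.ne']
    have hPA : (y / (y + 1)) ^ am = A⁻¹ := by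
      rw [hratio, Real.inv_rpow (by positivity), htam]
    rw [hPA, hAeq]
    field_simp
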